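/- Let Q be a finite nonnegative measure on [0,1]² (or more generally [0,1]^d) and for q ≥ 0 set ψ(q) = ∫ (e^{-q s₁} - 1 + q s₁) dQ(s) and ψ̃(q) = ∫ ((1-s₁)^q - 1 + q s₁) dQ(s). Then for all q ≥ 2, ψ̃(q) ≤ ψ(q) ≤ 2 ψ̃(q). Consequently, for any s > 0, ∫_s^∞ dq/ψ(q) < ∞ if and only if ∫_s^∞ dq/ψ̃(q) < ∞ (assuming ψ, ψ̃ are positive on [s,∞)). -/

import Mathlib

open MeasureTheory Real Set

lemma aux_exp_quad {x : ℝ} (hx : 0 ≤ x) : Real.exp (-x) ≤ 1 - x + x ^ 2 / 2 := by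
  have hf : ∀ y : ℝ, HasDerivAt (fun t : ℝ => 1 - t + t ^ 2 / 2 - Real.exp (-t))
      (-1 + y + Real.exp (-y)) y := by
    intro y
    have h1 : HasDerivAt (fun t : ℝ => Real.exp (-t)) (-Real.exp (-y)) y := by
      simpa using (hasDerivAt_neg y).exp
    have h2 : HasDerivAt (fun t : ℝ => 1 - t + t ^ 2 / 2) (-1 + y) y := by
      have h3 := ((hasDerivAt_id y).const_sub 1).add ((hasDerivAt_pow 2 y).div_const 2)
      exact h3.congr_deriv (by norm_num)
    exact (h2.sub h1).congr_deriv (by ring)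
  have hmono : MonotoneOn (fun t : ℝ => 1 - t + t ^ 2 / 2 - Real.exp (-t)) (Set.Ici 0) := by
    apply monotoneOn_of_deriv_nonneg (convex_Ici 0)
    · exact Continuous.continuousOn (by continuity)
    · intro y _; exact (hf y).differentiableAt.differentiableWithinAt
    · intro y _
      rw [(hf y).deriv]
      have := Real.add_one_le_exp (-y)
      linarith
  have h0 := hmono Set.self_mem_Ici hx hx
  norm_num [Real.exp_zero] at h0
  linarith

lemma aux_rpow_le_exp {u q : ℝ} (hu1 : u ≤ 1) (hq : 0 ≤ q) :
    (1 - u) ^ q ≤ Real.exp (-(q * u)) := by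
  have h1 : (0:ℝ) ≤ 1 - u := by linarith
  have h2 : 1 - u ≤ Real.exp (-u) := by
    have := Real.add_one_le_exp (-u); linarith
  calc (1 - u) ^ q ≤ (Real.exp (-u)) ^ q := Real.rpow_le_rpow h1 h2 hq
    _ = Real.exp (-u * q) := (Real.exp_mul _ _).symm
    _ = Real.exp (-(q * u)) := by ring_nf

lemma aux_bernoulli {u p : ℝ} (hu1 : u ≤ 1) (hp : 1 ≤ p) :
    1 - p * u ≤ (1 - u) ^ p := by
  have := one_add_mul_self_le_rpow_one_add (s := -u) (by linarith) hp
  simpa [sub_eq_add_neg, mul_neg] using this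

lemma aux_key {u q : ℝ} (hu0 : 0 ≤ u) (hu1 : u ≤ 1) (hq : 2 ≤ q) :
    Real.exp (-(q * u)) - 1 + q * u ≤ 2 * ((1 - u) ^ q - 1 + q * u) := by
  have ha : (0:ℝ) ≤ 1 - u := by linarith
  have hx0 : 0 ≤ q * u := mul_nonneg (by linarith) hu0
  rcases le_or_gt (q * u) 2 with hx | hx
  · have hb : 1 - (q / 2) * u ≤ (1 - u) ^ (q / 2) := aux_bernoulli hu1 (by linarith)
    have hb0 : (0:ℝ) ≤ 1 - (q / 2) * u := by nlinarith
    have hsq : (1 - (q / 2) * u) ^ (2:ℕ) ≤ ((1 - u) ^ (q / 2)) ^ (2:ℕ) :=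
      pow_le_pow_left₀ hb0 hb 2
    have hrw : ((1 - u) ^ (q / 2)) ^ (2:ℕ) = (1 - u) ^ q := by
      rw [← Real.rpow_natCast ((1 - u) ^ (q / 2)) 2, ← Real.rpow_mul ha]
      norm_num
    have hquad := aux_exp_quad hx0
    nlinarith [hsq, hrw]
  · have h1 : Real.exp (-(q * u)) ≤ 1 := by
      rw [Real.exp_le_one_iff]; linarith
    have h2 : (0:ℝ) ≤ (1 - u) ^ q := Real.rpow_nonneg ha q
    nlinarith

theorem stmt9 (d : ℕ) (hd : 0 < d) (Q : Measure (Fin d → ℝ)) [IsFiniteMeasure Q]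
    (hcube : Q {s | ¬ ∀ i, s i ∈ Set.Icc (0 : ℝ) 1} = 0)
    (ψ ψt : ℝ → ℝ)
    (hψ : ∀ q, ψ q = ∫ s, (Real.exp (-(q * s ⟨0, hd⟩)) - 1 + q * s ⟨0, hd⟩) ∂Q)
    (hψt : ∀ q, ψt q = ∫ s, ((1 - s ⟨0, hd⟩) ^ q - 1 + q * s ⟨0, hd⟩) ∂Q) :
    (∀ q, 2 ≤ q → ψt q ≤ ψ q ∧ ψ q ≤ 2 * ψt q) ∧
    (∀ s > (0 : ℝ), (∀ q ∈ Set.Ici s, 0 < ψ q ∧ 0 < ψt q) →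
      (IntegrableOn (fun q => 1 / ψ q) (Set.Ioi s) ↔
        IntegrableOn (fun q => 1 / ψt q) (Set.Ioi s))) := by
  set i : Fin d := ⟨0, hd⟩ with hi
  have hae : ∀ᵐ w ∂Q, w i ∈ Set.Icc (0:ℝ) 1 := by
    have h0 : ∀ᵐ w ∂Q, ∀ j, w j ∈ Set.Icc (0:ℝ) 1 := ae_iff.mpr hcube
    exact h0.mono fun w h => h i
  have meas1 : ∀ q : ℝ, AEStronglyMeasurable
      (fun w : Fin d → ℝ => Real.exp (-(q * w i)) - 1 + q * w i) Q := by
    intro q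
    apply Measurable.aestronglyMeasurable
    exact (((measurable_const.mul (measurable_pi_apply i)).neg.exp.sub
      measurable_const).add (measurable_const.mul (measurable_pi_apply i)))
  have meas2 : ∀ q : ℝ, AEStronglyMeasurable
      (fun w : Fin d → ℝ => (1 - w i) ^ q - 1 + q * w i) Q := by
    intro q
    apply Measurable.aestronglyMeasurable
    exact ((((measurable_const.sub (measurable_pi_apply i)).pow measurable_const).sub
      measurable_const).add (measurable_const.mul (measurable_pi_apply i)))
  have hint1 : ∀ q : ℝ, 0 ≤ q →
      Integrable (fun w : Fin d → ℝ => Real.exp (-(q * w i)) - 1 + q * w i) Q := by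
    intro q hq
    apply Integrable.mono' (integrable_const q) (meas1 q)
    filter_upwards [hae] with w hw
    have hexp1 := Real.add_one_le_exp (-(q * w i))
    have hexp2 : Real.exp (-(q * w i)) ≤ 1 := by
      rw [Real.exp_le_one_iff]; nlinarith [hw.1]
    rw [Real.norm_eq_abs, abs_le]
    constructor <;> nlinarith [hw.1, hw.2]
  have hint2 : ∀ q : ℝ, 1 ≤ q →
      Integrable (fun w : Fin d → ℝ => (1 - w i) ^ q - 1 + q * w i) Q := by
    intro q hq
    apply Integrable.mono' (integrable_const q) (meas2 q)
    filter_upwards [hae] with w hw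
    have hb := aux_bernoulli hw.2 hq
    have hub : (1 - w i) ^ q ≤ 1 :=
      Real.rpow_le_one (by linarith [hw.2]) (by linarith [hw.1]) (by linarith)
    rw [Real.norm_eq_abs, abs_le]
    constructor <;> nlinarith [hw.1, hw.2]
  have hmain : ∀ q, 2 ≤ q → ψt q ≤ ψ q ∧ ψ q ≤ 2 * ψt q := by
    intro q hq
    rw [hψ, hψt]
    constructor
    · apply integral_mono_ae (hint2 q (by linarith)) (hint1 q (by linarith))
      filter_upwards [hae] with w hw
      have := aux_rpow_le_exp hw.2 (by linarith : (0:ℝ) ≤ q)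
      linarith
    · have hmul : (2:ℝ) * ∫ w, ((1 - w i) ^ q - 1 + q * w i) ∂Q
          = ∫ w, 2 * ((1 - w i) ^ q - 1 + q * w i) ∂Q := by
        rw [← smul_eq_mul, ← integral_smul]
        simp [smul_eq_mul]
      rw [hmul]
      apply integral_mono_ae (hint1 q (by linarith)) ((hint2 q (by linarith)).const_mul 2)
      filter_upwards [hae] with w hw
      exact aux_key hw.1 hw.2 hq
  refine ⟨hmain, ?_⟩
  intro a ha hpos
  have hcψ : ∀ q₀ ∈ Set.Ici a, ContinuousAt ψ q₀ := by
    intro q₀ _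
    have hψeq : ψ = fun q => ∫ w, (Real.exp (-(q * w i)) - 1 + q * w i) ∂Q := funext hψ
    rw [hψeq]
    apply continuousAt_of_dominated (bound := fun _ => Real.exp (|q₀| + 1) + 1 + (|q₀| + 1))
    · exact Filter.Eventually.of_forall meas1
    · have hev : ∀ᶠ q in nhds q₀, |q - q₀| < 1 := by
        have hb : Metric.ball q₀ 1 ∈ nhds q₀ := Metric.ball_mem_nhds q₀ one_pos
        filter_upwards [hb] with q hq
        simpa [Real.dist_eq] using hq
      filter_upwards [hev] with q hq
      filter_upwards [hae] with w hw
      have hqb : |q| ≤ |q₀| + 1 := by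
        have := abs_sub_abs_le_abs_sub q q₀
        linarith
      have h1 : Real.exp (-(q * w i)) ≤ Real.exp (|q₀| + 1) := by
        apply Real.exp_le_exp.mpr
        have hrw2 : -(q * w i) = (-q) * w i := by ring
        rw [hrw2]
        have h2 : (-q) * w i ≤ |q| * w i := mul_le_mul_of_nonneg_right (neg_le_abs q) hw.1
        nlinarith [hw.1, hw.2, abs_nonneg q]
      have h3 : |q * w i| ≤ |q₀| + 1 := by
        rw [abs_mul]
        have hwi : |w i| ≤ 1 := by rw [abs_le]; constructor <;> linarith [hw.1, hw.2]
        nlinarith [abs_nonneg q]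
      have h3' := abs_le.mp h3
      rw [Real.norm_eq_abs, abs_le]
      constructor <;> nlinarith [Real.exp_pos (-(q * w i))]
    · exact integrable_const _
    · refine Filter.Eventually.of_forall fun w => Continuous.continuousAt ?_
      exact (((continuous_id.mul continuous_const).neg.rexp.sub continuous_const).add
        (continuous_id.mul continuous_const))
  have hcψt : ∀ q₀ ∈ Set.Ici a, ContinuousAt ψt q₀ := by
    intro q₀ hq₀
    have hq₀pos : 0 < q₀ := lt_of_lt_of_le ha hq₀
    have hψteq : ψt = fun q => ∫ w, ((1 - w i) ^ q - 1 + q * w i) ∂Q := funext hψt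
    rw [hψteq]
    apply continuousAt_of_dominated (bound := fun _ => 1 + 1 + (|q₀| + 1))
    · exact Filter.Eventually.of_forall meas2
    · have hev : ∀ᶠ q in nhds q₀, |q - q₀| < min 1 q₀ := by
        have hb : Metric.ball q₀ (min 1 q₀) ∈ nhds q₀ :=
          Metric.ball_mem_nhds q₀ (lt_min one_pos hq₀pos)
        filter_upwards [hb] with q hq
        simpa [Real.dist_eq] using hq
      filter_upwards [hev] with q hq
      filter_upwards [hae] with w hw
      have hq1 : |q - q₀| < 1 := lt_of_lt_of_le hq (min_le_left _ _)
      have hqpos : 0 < q := by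
        have h4 := lt_of_lt_of_le hq (min_le_right _ _)
        have h5 := abs_lt.mp h4
        linarith [h5.1]
      have hqb : |q| ≤ |q₀| + 1 := by
        have := abs_sub_abs_le_abs_sub q q₀
        linarith
      have hub : (1 - w i) ^ q ≤ 1 :=
        Real.rpow_le_one (by linarith [hw.2]) (by linarith [hw.1]) hqpos.le
      have hlb : (0:ℝ) ≤ (1 - w i) ^ q := Real.rpow_nonneg (by linarith [hw.2]) q
      have h3 : |q * w i| ≤ |q₀| + 1 := by
        rw [abs_mul]
        have hwi : |w i| ≤ 1 := by rw [abs_le]; constructor <;> linarith [hw.1, hw.2]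
        nlinarith [abs_nonneg q]
      have h3' := abs_le.mp h3
      rw [Real.norm_eq_abs, abs_le]
      constructor <;> nlinarith
    · exact integrable_const _
    · filter_upwards [hae] with w hw
      have hc1 : ContinuousAt (fun q : ℝ => (1 - w i) ^ q) q₀ :=
        Real.continuousAt_const_rpow' (ne_of_gt hq₀pos)
      have hc2 : ContinuousAt (fun q : ℝ => q * w i) q₀ :=
        (continuous_id.mul continuous_const).continuousAt
      exact (hc1.sub continuousAt_const).add hc2
  set m := max a 2 with hm
  have hsm : a ≤ m := le_max_left _ _
  have h2m : (2:ℝ) ≤ m := le_max_right _ _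
  have hsub : Set.Ioi m ⊆ Set.Ici a := fun q hq => le_trans hsm (le_of_lt hq)
  have hseg : ∀ f : ℝ → ℝ, (∀ q₀ ∈ Set.Ici a, ContinuousAt f q₀) →
      (∀ q ∈ Set.Ici a, 0 < f q) → IntegrableOn (fun q => 1 / f q) (Set.Ioc a m) := by
    intro f hc hp
    rcases le_or_gt a 2 with h | h
    · have hm2 : m = 2 := max_eq_right h
      have hco : ContinuousOn (fun q => 1 / f q) (Set.Icc a 2) := by
        apply ContinuousOn.div continuousOn_const
        · intro q hq; exact (hc q hq.1).continuousWithinAt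
        · intro q hq; exact (hp q hq.1).ne'
      rw [hm2]
      exact (hco.integrableOn_Icc).mono_set Set.Ioc_subset_Icc_self
    · have hm2 : m = a := max_eq_left h.le
      rw [hm2, Set.Ioc_self]
      exact integrableOn_empty
  have haesm : ∀ f : ℝ → ℝ, (∀ q₀ ∈ Set.Ici a, ContinuousAt f q₀) →
      (∀ q ∈ Set.Ici a, 0 < f q) →
      AEStronglyMeasurable (fun q => 1 / f q) (volume.restrict (Set.Ioi m)) := by
    intro f hc hp
    have hco : ContinuousOn (fun q => 1 / f q) (Set.Ioi m) := by
      apply ContinuousOn.div continuousOn_const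
      · intro q hq; exact (hc q (hsub hq)).continuousWithinAt
      · intro q hq; exact (hp q (hsub hq)).ne'
    exact hco.aestronglyMeasurable measurableSet_Ioi
  have hpψ : ∀ q ∈ Set.Ici a, 0 < ψ q := fun q hq => (hpos q hq).1
  have hpψt : ∀ q ∈ Set.Ici a, 0 < ψt q := fun q hq => (hpos q hq).2
  have hkey : ∀ h : ℝ → ℝ, IntegrableOn h (Set.Ioc a m) →
      (IntegrableOn h (Set.Ioi a) ↔ IntegrableOn h (Set.Ioi m)) := by
    intro h hh
    constructor
    · intro H; exact H.mono_set (Set.Ioi_subset_Ioi hsm)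
    · intro H
      rw [← Set.Ioc_union_Ioi_eq_Ioi hsm]
      exact hh.union H
  rw [hkey _ (hseg ψ hcψ hpψ), hkey _ (hseg ψt hcψt hpψt)]
  constructor
  · intro H
    apply Integrable.mono' (H.const_mul 2) (haesm ψt hcψt hpψt)
    rw [ae_restrict_iff' measurableSet_Ioi]
    apply Filter.Eventually.of_forall
    intro q hq
    have hqm : (2:ℝ) ≤ q := le_trans h2m (le_of_lt hq)
    have h1 := hpψ q (hsub hq)
    have h2 := hpψt q (hsub hq)
    have h3 := (hmain q hqm).2
    rw [Real.norm_eq_abs, abs_of_pos (by positivity), mul_one_div, div_le_div_iff₀ h2 h1]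
    nlinarith
  · intro H
    apply Integrable.mono' H (haesm ψ hcψ hpψ)
    rw [ae_restrict_iff' measurableSet_Ioi]
    apply Filter.Eventually.of_forall
    intro q hq
    have hqm : (2:ℝ) ≤ q := le_trans h2m (le_of_lt hq)
    have h1 := hpψ q (hsub hq)
    have h2 := hpψt q (hsub hq)
    have h3 := (hmain q hqm).1
    rw [Real.norm_eq_abs, abs_of_pos (by positivity)]
    exact one_div_le_one_div_of_le h2 h3
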